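/- The simple graph G on vertex set {1,2,3,4,5,6,7} with edge set {{1,2},{1,3},{1,7},{2,4},{2,6},{2,7},{3,4},{3,5},{3,7},{4,5},{5,6}} (graph number 863 in the Atlas of Graphs) has minimum rank 3 over the real numbers. -/

import Mathlib

/-- Edge list of graph number 863 in the Atlas of Graphs (vertices 1..7). -/
def atlas863Edges : List (ℕ × ℕ) := [(1,2),(1,3),(1,7),(2,4),(2,6),(2,7),(3,4),(3,5),(3,7),(4,5),(5,6)]

private lemma submatrix_eq_mul (A : Matrix (Fin 7) (Fin 7) ℝ) (f g : Fin 3 → Fin 7) :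
    A.submatrix f g =
      (Matrix.of fun (i : Fin 3) (j : Fin 7) => if j = f i then (1:ℝ) else 0) * A *
      (Matrix.of fun (i : Fin 7) (j : Fin 3) => if i = g j then (1:ℝ) else 0) := by
  ext i j
  simp [Matrix.mul_apply, Finset.sum_ite_eq, ite_mul, Finset.mul_sum, mul_ite]

private lemma rank_ge_three (A : Matrix (Fin 7) (Fin 7) ℝ) (f g : Fin 3 → Fin 7)
    (h : (A.submatrix f g).det ≠ 0) : 3 ≤ A.rank := by
  have h1 : (A.submatrix f g).rank = 3 := by
    rw [Matrix.rank_of_isUnit _ ((Matrix.isUnit_iff_isUnit_det _).mpr h.isUnit)]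
    simp
  set P := (Matrix.of fun (i : Fin 3) (j : Fin 7) => if j = f i then (1:ℝ) else 0)
  set Q := (Matrix.of fun (i : Fin 7) (j : Fin 3) => if i = g j then (1:ℝ) else 0)
  calc (3 : ℕ) = (A.submatrix f g).rank := h1.symm
    _ = (P * A * Q).rank := by rw [submatrix_eq_mul A f g]
    _ ≤ (P * A).rank := Matrix.rank_mul_le_left _ _
    _ ≤ A.rank := Matrix.rank_mul_le_right _ _

private def B : Matrix (Fin 7) (Fin 3) ℝ :=
  !![-1,-1,-1; -1,-1,0; -1,1,-1; -1,2,-1; -1,1,0; -1,0,1; -1,-1,-1]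

private def A0 : Matrix (Fin 7) (Fin 7) ℝ :=
  !![3,2,1,0,0,0,3;
     2,2,0,-1,0,1,2;
     1,0,3,4,2,0,1;
     0,-1,4,6,3,0,0;
     0,0,2,3,2,1,0;
     0,1,0,0,1,2,0;
     3,2,1,0,0,0,3]

private lemma cv5 {α : Type*} (a b c d e f g : α) : ![a,b,c,d,e,f,g] 5 = f := rfl
private lemma cv6 {α : Type*} (a b c d e f g : α) : ![a,b,c,d,e,f,g] 6 = g := rfl

private lemma f43 : (3:Fin 4) = ((2:Fin 3).succ) := rfl
private lemma f53 : (3:Fin 5) = ((2:Fin 4).succ) := rfl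
private lemma f54 : (4:Fin 5) = ((3:Fin 4).succ) := rfl
private lemma f63 : (3:Fin 6) = ((2:Fin 5).succ) := rfl
private lemma f64 : (4:Fin 6) = ((3:Fin 5).succ) := rfl
private lemma f65 : (5:Fin 6) = ((4:Fin 5).succ) := rfl
private lemma f73 : (3:Fin 7) = ((2:Fin 6).succ) := rfl
private lemma f74 : (4:Fin 7) = ((3:Fin 6).succ) := rfl
private lemma f75 : (5:Fin 7) = ((4:Fin 6).succ) := rfl
private lemma f76 : (6:Fin 7) = ((5:Fin 6).succ) := rfl

private lemma A0_eq : A0 = B * B.transpose := by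
  ext i j
  rw [Matrix.mul_apply]
  simp only [Matrix.transpose_apply, Fin.sum_univ_three]
  fin_cases i <;> fin_cases j <;> simp [A0, B] <;> norm_num

/-- Graph number 863 in the Atlas of Graphs has minimum rank 3 over the reals:
3 is the least element of the set of ranks of real symmetric 7×7 matrices whose
off-diagonal zero/nonzero pattern matches the edges of the graph. -/
theorem atlas863_minRank_eq_three :
    IsLeast {r : ℕ | ∃ A : Matrix (Fin 7) (Fin 7) ℝ, A.IsSymm ∧
        (∀ i j : Fin 7, i ≠ j →
          (A i j ≠ 0 ↔
            ((i.val + 1, j.val + 1) ∈ atlas863Edges ∨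
             (j.val + 1, i.val + 1) ∈ atlas863Edges))) ∧
        A.rank = r} 3 := by
  constructor
  · refine ⟨A0, ?_, ?_, ?_⟩
    · rw [A0_eq, Matrix.IsSymm, Matrix.transpose_mul, Matrix.transpose_transpose]
    · intro i j hij
      fin_cases i <;> fin_cases j <;> simp_all [A0, atlas863Edges, Matrix.cons_val_succ, f43, f53, f54, f63, f64, f65, f73, f74, f75, f76] <;> first | rfl | norm_num
    · refine le_antisymm ?_ ?_
      · calc A0.rank = (B * B.transpose).rank := by rw [A0_eq]
          _ ≤ B.rank := Matrix.rank_mul_le_left _ _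
          _ ≤ 3 := by simpa using B.rank_le_card_width
      · refine rank_ge_three A0 ![0, 1, 2] ![0, 1, 2] ?_
        rw [Matrix.det_fin_three]
        simp [A0, Matrix.submatrix_apply] <;> norm_num
  · rintro r ⟨A, -, hpat, rfl⟩
    refine rank_ge_three A ![1, 3, 4] ![0, 1, 3] ?_
    have h10 : A 1 0 ≠ 0 := (hpat 1 0 (by decide)).mpr (by decide)
    have h13 : A 1 3 ≠ 0 := (hpat 1 3 (by decide)).mpr (by decide)
    have h31 : A 3 1 ≠ 0 := (hpat 3 1 (by decide)).mpr (by decide)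
    have h43 : A 4 3 ≠ 0 := (hpat 4 3 (by decide)).mpr (by decide)
    have h30 : A 3 0 = 0 := by
      by_contra h
      exact absurd ((hpat 3 0 (by decide)).mp h) (by decide)
    have h40 : A 4 0 = 0 := by
      by_contra h
      exact absurd ((hpat 4 0 (by decide)).mp h) (by decide)
    have h41 : A 4 1 = 0 := by
      by_contra h
      exact absurd ((hpat 4 1 (by decide)).mp h) (by decide)
    rw [Matrix.det_fin_three]
    simp only [Matrix.submatrix_apply]
    simp only [Matrix.cons_val_zero, Matrix.cons_val_one, Matrix.head_cons,
      Matrix.cons_val_two, Matrix.tail_cons]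
    rw [h30, h40, h41]
    ring_nf
    exact mul_ne_zero (mul_ne_zero h10 h31) h43
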